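/- Define the auxiliary state φ(t,ξ) = ∫_0^t exp(−ξ(t−τ)) r(τ) dτ for a continuous function r : [0,∞) → ℝ and ξ > 0. Then for all t ≥ 0, (1/π) ∫_0^∞ φ(t,ξ)/√ξ dξ = (1/√π) ∫_0^t r(τ)/√(t−τ) dτ, i.e., the diffusive representation equals the Riemann–Liouville half-integral of r at t. -/

import Mathlib

open MeasureTheory Real Set Filter

private lemma halfint_aux {s : ℝ} (hs : 0 < s) :
    ∫ ξ in Ioi (0:ℝ), Real.exp (-(s * ξ)) / Real.sqrt ξ = Real.sqrt π / Real.sqrt s := by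
  have h := Real.integral_rpow_mul_exp_neg_mul_Ioi (a := 1/2) one_half_pos hs
  have heq : ∀ ξ ∈ Ioi (0:ℝ), ξ ^ ((1:ℝ)/2 - 1) * Real.exp (-(s * ξ))
      = Real.exp (-(s * ξ)) / Real.sqrt ξ := by
    intro ξ hξ
    rw [show (1:ℝ)/2 - 1 = -(1/2) by norm_num, Real.rpow_neg (le_of_lt hξ),
      ← Real.sqrt_eq_rpow]
    ring
  rw [setIntegral_congr_fun measurableSet_Ioi heq] at h
  rw [h, ← Real.sqrt_eq_rpow, Real.Gamma_one_half_eq, one_div, Real.sqrt_inv]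
  ring

private lemma halfint_integrable {s : ℝ} (hs : 0 < s) :
    IntegrableOn (fun ξ => Real.exp (-(s * ξ)) / Real.sqrt ξ) (Ioi 0) := by
  have := integrableOn_rpow_mul_exp_neg_mul_rpow (s := -(1/2)) (p := 1) (b := s)
    (by norm_num) one_pos hs
  refine this.congr_fun (fun ξ hξ => ?_) measurableSet_Ioi
  dsimp only
  rw [Real.rpow_one, Real.rpow_neg (le_of_lt hξ), ← Real.sqrt_eq_rpow, neg_mul]
  ring

theorem stmt_10 (r : ℝ → ℝ) (hr : Continuous r) (t : ℝ) (ht : 0 ≤ t) :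
    (1 / Real.pi) * ∫ ξ in Set.Ioi (0 : ℝ),
        (∫ τ in (0 : ℝ)..t, Real.exp (-ξ * (t - τ)) * r τ) / Real.sqrt ξ
      = (1 / Real.sqrt Real.pi) * ∫ τ in (0 : ℝ)..t, r τ / Real.sqrt (t - τ) := by
  set F : ℝ × ℝ → ℝ := fun p => Real.exp (-p.1 * (t - p.2)) * r p.2 / Real.sqrt p.1 with hF
  set μ := volume.restrict (Ioi (0:ℝ)) with hμ
  set ν := volume.restrict (Ioc (0:ℝ) t) with hν
  obtain ⟨M, hM⟩ : ∃ M, ∀ τ ∈ Ioc (0:ℝ) t, |r τ| ≤ M := by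
    obtain ⟨M, hM⟩ := (isCompact_Icc (a := (0:ℝ)) (b := t)).exists_bound_of_continuousOn
      hr.continuousOn
    exact ⟨M, fun τ hτ => by simpa using hM τ ⟨hτ.1.le, hτ.2⟩⟩
  have hae : ∀ᵐ τ ∂ν, τ ∈ Ioo 0 t := by
    have h1 : ∀ᵐ τ ∂ν, τ ∈ Ioc 0 t := ae_restrict_mem measurableSet_Ioc
    have h2 : ∀ᵐ τ ∂ν, τ ≠ t := by
      refine ae_restrict_of_ae ?_
      have h3 : volume ({t} : Set ℝ) = 0 := measure_singleton t
      rw [ae_iff]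
      simp only [not_not]
      simpa using h3
    filter_upwards [h1, h2] with τ hτ hτ' using ⟨hτ.1, lt_of_le_of_ne hτ.2 hτ'⟩
  have hFm : AEStronglyMeasurable F (μ.prod ν) := by
    apply Measurable.aestronglyMeasurable; fun_prop
  -- value of the ξ-integral of a section
  have hsec : ∀ τ ∈ Ioo (0:ℝ) t,
      (∫ ξ, F (ξ, τ) ∂μ) = r τ * (Real.sqrt π / Real.sqrt (t - τ)) := by
    intro τ hτ
    have hs : 0 < t - τ := sub_pos.mpr hτ.2
    have heq : (fun ξ => F (ξ, τ))
        = fun ξ => (Real.exp (-((t - τ) * ξ)) / Real.sqrt ξ) * r τ := by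
      funext ξ
      simp only [hF, show ∀ ξ : ℝ, -ξ * (t - τ) = -((t - τ) * ξ) from fun ξ => by ring]
      ring
    rw [heq, hμ, integral_mul_const, halfint_aux hs, mul_comm]
  have hsecnorm : ∀ τ ∈ Ioo (0:ℝ) t,
      (∫ ξ, ‖F (ξ, τ)‖ ∂μ) = |r τ| * (Real.sqrt π / Real.sqrt (t - τ)) := by
    intro τ hτ
    have hs : 0 < t - τ := sub_pos.mpr hτ.2
    have heq : ∀ ξ ∈ Ioi (0:ℝ), ‖F (ξ, τ)‖
        = (Real.exp (-((t - τ) * ξ)) / Real.sqrt ξ) * |r τ| := by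
      intro ξ _
      simp only [hF, Real.norm_eq_abs, abs_div, abs_mul, abs_of_pos (Real.exp_pos _),
        abs_of_nonneg (Real.sqrt_nonneg ξ), show -ξ * (t - τ) = -((t - τ) * ξ) by ring]
      ring
    rw [hμ, setIntegral_congr_fun measurableSet_Ioi heq, integral_mul_const,
      halfint_aux hs, mul_comm]
  -- sections integrable
  have hsecint : ∀ᵐ τ ∂ν, Integrable (fun ξ => F (ξ, τ)) μ := by
    filter_upwards [hae] with τ hτ
    have hs : 0 < t - τ := sub_pos.mpr hτ.2
    have heq : (fun ξ => F (ξ, τ))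
        = fun ξ => (Real.exp (-((t - τ) * ξ)) / Real.sqrt ξ) * r τ := by
      funext ξ
      simp only [hF, show ∀ ξ : ℝ, -ξ * (t - τ) = -((t - τ) * ξ) from fun ξ => by ring]
      ring
    rw [heq, hμ]
    exact (halfint_integrable hs).mul_const _
  -- the comparison function is integrable
  have hbint : IntegrableOn (fun τ : ℝ => (t - τ) ^ (-(1/2) : ℝ)) (Ioc 0 t) := by
    have h1 : IntervalIntegrable (fun x : ℝ => x ^ (-(1/2) : ℝ)) volume 0 t :=
      intervalIntegral.intervalIntegrable_rpow' (by norm_num)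
    have h2 := h1.comp_sub_left t
    simp only [sub_zero, sub_self] at h2
    exact (intervalIntegrable_iff_integrableOn_Ioc_of_le ht).mp h2.symm
  have hInt : Integrable (fun τ : ℝ => |r τ| * (Real.sqrt π / Real.sqrt (t - τ))) ν := by
    refine Integrable.mono' (hbint.const_mul (M * Real.sqrt π)) ?_ ?_
    · apply Measurable.aestronglyMeasurable; fun_prop
    · filter_upwards [hae] with τ hτ
      have hs : 0 < t - τ := sub_pos.mpr hτ.2
      have hrpow : (t - τ) ^ (-(1/2) : ℝ) = (Real.sqrt (t - τ))⁻¹ := by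
        rw [show (-(1/2) : ℝ) = -(1/2) by norm_num, Real.rpow_neg hs.le, ← Real.sqrt_eq_rpow]
      have hsq : 0 < Real.sqrt (t - τ) := Real.sqrt_pos.mpr hs
      have hrb := hM τ ⟨hτ.1, hτ.2.le⟩
      rw [Real.norm_eq_abs,
        abs_of_nonneg (mul_nonneg (abs_nonneg _) (by positivity : (0:ℝ) ≤ Real.sqrt π / Real.sqrt (t - τ))),
        hrpow, div_eq_mul_inv]
      calc |r τ| * (Real.sqrt π * (Real.sqrt (t - τ))⁻¹)
          ≤ M * (Real.sqrt π * (Real.sqrt (t - τ))⁻¹) :=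
            mul_le_mul_of_nonneg_right hrb (by positivity)
        _ = M * Real.sqrt π * (Real.sqrt (t - τ))⁻¹ := by ring
  have hnormint : Integrable (fun τ => ∫ ξ, ‖F (ξ, τ)‖ ∂μ) ν := by
    refine hInt.congr ?_
    filter_upwards [hae] with τ hτ
    exact (hsecnorm τ hτ).symm
  have hFint : Integrable F (μ.prod ν) :=
    (integrable_prod_iff' hFm).mpr ⟨hsecint, hnormint⟩
  -- rewrite LHS inner expression
  have hL : ∀ ξ : ℝ, (∫ τ in (0:ℝ)..t, Real.exp (-ξ * (t - τ)) * r τ) / Real.sqrt ξ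
      = ∫ τ, F (ξ, τ) ∂ν := by
    intro ξ
    rw [intervalIntegral.integral_of_le ht, ← integral_div]
  simp_rw [hL]
  have hswap : (∫ ξ, ∫ τ, F (ξ, τ) ∂ν ∂μ) = ∫ τ, ∫ ξ, F (ξ, τ) ∂μ ∂ν :=
    integral_integral_swap hFint
  rw [show (∫ ξ in Set.Ioi (0:ℝ), ∫ τ, F (ξ, τ) ∂ν) = ∫ ξ, ∫ τ, F (ξ, τ) ∂ν ∂μ from rfl,
    hswap]
  have hval : (∫ τ, ∫ ξ, F (ξ, τ) ∂μ ∂ν)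
      = ∫ τ, Real.sqrt π * (r τ / Real.sqrt (t - τ)) ∂ν := by
    refine integral_congr_ae ?_
    filter_upwards [hae] with τ hτ
    rw [hsec τ hτ]
    ring
  rw [hval, integral_const_mul]
  rw [intervalIntegral.integral_of_le ht]
  have hpi : Real.sqrt π * Real.sqrt π = π := Real.mul_self_sqrt Real.pi_pos.le
  have hpi' : Real.sqrt π ≠ 0 := ne_of_gt (Real.sqrt_pos.mpr Real.pi_pos)
  rw [← mul_assoc]
  congr 1
  field_simp
  exact Real.sq_sqrt Real.pi_pos.le
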